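/- Combining the previous two facts: if there exists a symmetric positive definite P with M_ηᵀ P M_η - P ≺ 0 for all 2^ν vertex matrices M_η, then for every τ ∈ [0, τ̄] the matrix Ā(τ) := M₀ + Σ_i α_i(τ) M_i is Schur stable. -/

import Mathlib

open Matrix

lemma re_star_dotProduct {d : ℕ} (Q : Matrix (Fin d) (Fin d) ℝ) (v : Fin d → ℂ) :
    (star v ⬝ᵥ (Q.map ((↑) : ℝ → ℂ)) *ᵥ v).re =
      (fun i => (v i).re) ⬝ᵥ Q *ᵥ (fun i => (v i).re) +
      (fun i => (v i).im) ⬝ᵥ Q *ᵥ (fun i => (v i).im) := by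
  simp only [dotProduct, mulVec, Pi.star_apply, Matrix.map_apply, Complex.re_sum,
    Finset.mul_sum]
  rw [← Finset.sum_add_distrib]
  refine Finset.sum_congr rfl fun i _ => ?_
  rw [← Finset.sum_add_distrib]
  refine Finset.sum_congr rfl fun j _ => ?_
  simp only [RCLike.star_def, Complex.mul_re, Complex.mul_im, Complex.conj_re, Complex.conj_im,
    Complex.ofReal_re, Complex.ofReal_im]
  ring

lemma re_pos_of_posDef {d : ℕ} {Q : Matrix (Fin d) (Fin d) ℝ} (hQ : Q.PosDef)
    {v : Fin d → ℂ} (hv : v ≠ 0) :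
    0 < (star v ⬝ᵥ (Q.map ((↑) : ℝ → ℂ)) *ᵥ v).re := by
  rw [re_star_dotProduct]
  set a : Fin d → ℝ := fun i => (v i).re with ha
  set b : Fin d → ℝ := fun i => (v i).im with hb
  have hab : a ≠ 0 ∨ b ≠ 0 := by
    by_contra h
    push_neg at h
    apply hv
    funext i
    have h1 := congrFun h.1 i
    have h2 := congrFun h.2 i
    simp only [ha, hb, Pi.zero_apply] at h1 h2
    exact Complex.ext h1 h2
  have key : ∀ x : Fin d → ℝ, 0 ≤ x ⬝ᵥ Q *ᵥ x := fun x => by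
    simpa using hQ.posSemidef.dotProduct_mulVec_nonneg x
  have key' : ∀ x : Fin d → ℝ, x ≠ 0 → 0 < x ⬝ᵥ Q *ᵥ x := fun x hx => by
    simpa using hQ.dotProduct_mulVec_pos hx
  rcases hab with h | h
  · exact add_pos_of_pos_of_nonneg (key' a h) (key b)
  · exact add_pos_of_nonneg_of_pos (key a) (key' b h)

lemma schurStable_of_lyap {d : ℕ} (A P : Matrix (Fin d) (Fin d) ℝ) (hP : P.PosDef)
    (hQ : (P - Aᵀ * P * A).PosDef) :
    ∀ μ : ℂ, (Matrix.charpoly (A.map ((↑) : ℝ → ℂ))).IsRoot μ → ‖μ‖ < 1 := by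
  intro μ hroot
  set Ac := A.map ((↑) : ℝ → ℂ) with hAc
  -- eigenvector
  have hdet : (μ • (1 : Matrix (Fin d) (Fin d) ℂ) - Ac).det = 0 := by
    have := hroot
    rw [Polynomial.IsRoot, Matrix.charpoly] at this
    have h2 : (Polynomial.evalRingHom μ) (Matrix.charmatrix Ac).det = 0 := this
    rw [RingHom.map_det] at h2
    convert h2 using 2
    ext i j
    by_cases h : i = j <;>
      simp [h, Matrix.charmatrix_apply_eq, Matrix.charmatrix_apply_ne, Matrix.one_apply]
  obtain ⟨v, hv0, hv⟩ := (Matrix.exists_mulVec_eq_zero_iff).mpr hdet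
  have heig : Ac *ᵥ v = μ • v := by
    have h := hv
    rw [Matrix.sub_mulVec, sub_eq_zero] at h
    rw [← h, Matrix.smul_mulVec, Matrix.one_mulVec]
  set Pc := P.map ((↑) : ℝ → ℂ) with hPc
  have hmap : (P - Aᵀ * P * A).map ((↑) : ℝ → ℂ) = Pc - Acᵀ * Pc * Ac := by
    show Complex.ofRealHom.mapMatrix (P - Aᵀ * P * A) = _
    rw [map_sub, _root_.map_mul, _root_.map_mul]
    simp only [RingHom.mapMatrix_apply]
    rw [Matrix.transpose_map]
    rfl
  have hq := re_pos_of_posDef hQ hv0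
  have hp := re_pos_of_posDef hP hv0
  set p := star v ⬝ᵥ Pc *ᵥ v with hpdef
  have hherm : Acᴴ = Acᵀ := by
    ext i j
    simp [hAc, Matrix.conjTranspose_apply, Matrix.map_apply, Complex.conj_ofReal]
  have hconj : (starRingEnd ℂ) μ * μ = ((‖μ‖ ^ 2 : ℝ) : ℂ) := by
    rw [mul_comm, Complex.mul_conj, Complex.sq_norm]
  have hquad : star v ⬝ᵥ (Acᵀ * Pc * Ac) *ᵥ v = ((‖μ‖ ^ 2 : ℝ) : ℂ) * p := by
    rw [← hherm]
    have h1 : star v ⬝ᵥ (Acᴴ * Pc * Ac) *ᵥ v = star (Ac *ᵥ v) ⬝ᵥ Pc *ᵥ (Ac *ᵥ v) := by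
      simp only [star_mulVec, Matrix.dotProduct_mulVec, Matrix.vecMul_vecMul]
    rw [h1, heig, star_smul, Matrix.mulVec_smul, smul_dotProduct, dotProduct_smul,
      smul_eq_mul, smul_eq_mul, ← mul_assoc]
    rw [show (star μ : ℂ) = (starRingEnd ℂ) μ from rfl, hconj]
  have hsplit : star v ⬝ᵥ ((P - Aᵀ * P * A).map ((↑) : ℝ → ℂ)) *ᵥ v
      = p - ((‖μ‖ ^ 2 : ℝ) : ℂ) * p := by
    rw [hmap, Matrix.sub_mulVec, dotProduct_sub, hquad]
  rw [hsplit] at hq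
  have hre : (p - ((‖μ‖ ^ 2 : ℝ) : ℂ) * p).re = p.re - ‖μ‖ ^ 2 * p.re := by
    rw [Complex.sub_re, Complex.re_ofReal_mul]
  rw [hre] at hq
  have habs2 : ‖μ‖ ^ 2 < 1 := by nlinarith
  exact (pow_lt_one_iff_of_nonneg (norm_nonneg μ) two_ne_zero).mp habs2

lemma scalar_combo {t q1 q2 q3 : ℝ} (ht0 : 0 ≤ t) (ht1 : t ≤ 1)
    (h1 : 0 < q1) (h2 : 0 < q2) (h3 : 0 ≤ q3) :
    0 < t * q1 + (1 - t) * q2 + t * (1 - t) * q3 := by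
  rcases lt_or_eq_of_le ht1 with h | h
  · have e1 : 0 ≤ t * q1 := mul_nonneg ht0 h1.le
    have e2 : 0 < (1 - t) * q2 := mul_pos (by linarith) h2
    have e3 : 0 ≤ t * (1 - t) * q3 := mul_nonneg (mul_nonneg ht0 (by linarith)) h3
    linarith
  · subst h
    simpa using h1
  
lemma lyap_convex {d : ℕ} {P A B : Matrix (Fin d) (Fin d) ℝ} (hP : P.PosDef)
    {t : ℝ} (ht0 : 0 ≤ t) (ht1 : t ≤ 1)
    (hA : (P - Aᵀ * P * A).PosDef) (hB : (P - Bᵀ * P * B).PosDef) :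
    (P - (t • A + (1 - t) • B)ᵀ * P * (t • A + (1 - t) • B)).PosDef := by
  set C := t • A + (1 - t) • B with hC
  have hid : P - Cᵀ * P * C =
      t • (P - Aᵀ * P * A) + (1 - t) • (P - Bᵀ * P * B)
        + (t * (1 - t)) • ((A - B)ᵀ * P * (A - B)) := by
    simp only [hC, transpose_add, transpose_smul, transpose_sub, add_mul, mul_add,
      sub_mul, mul_sub, smul_mul_assoc, mul_smul_comm, smul_sub, smul_add, smul_smul]
    module
  refine posDef_iff_dotProduct_mulVec.mpr ⟨?_, ?_⟩
  · refine hP.1.sub ?_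
    rw [← Matrix.conjTranspose_eq_transpose_of_trivial C]
    exact Matrix.isHermitian_conjTranspose_mul_mul C hP.1
  · intro x hx
    rw [hid]
    have h3 : ((A - B)ᵀ * P * (A - B)).PosSemidef := by
      rw [← Matrix.conjTranspose_eq_transpose_of_trivial]
      exact hP.posSemidef.conjTranspose_mul_mul_same (A - B)
    have q1 := hA.dotProduct_mulVec_pos hx
    have q2 := hB.dotProduct_mulVec_pos hx
    have q3 := h3.dotProduct_mulVec_nonneg x
    simp only [Matrix.add_mulVec, Matrix.smul_mulVec, dotProduct_add,
      dotProduct_smul, smul_eq_mul]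
    exact scalar_combo ht0 ht1 q1 q2 q3

lemma box_posdef {d ν : ℕ} (αm αp : Fin ν → ℝ)
    (M₀ : Matrix (Fin d) (Fin d) ℝ) (M : Fin ν → Matrix (Fin d) (Fin d) ℝ)
    (P : Matrix (Fin d) (Fin d) ℝ) (hP : P.PosDef)
    (hvert : ∀ η : Fin ν → Bool,
      (P - (M₀ + ∑ i, (if η i then αp i else αm i) • M i)ᵀ * P *
            (M₀ + ∑ i, (if η i then αp i else αm i) • M i)).PosDef)
    (s : Finset (Fin ν)) :
    ∀ c : Fin ν → ℝ, (∀ i, c i ∈ Set.Icc (αm i) (αp i)) →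
      (∀ i ∉ s, c i = αm i ∨ c i = αp i) →
      (P - (M₀ + ∑ i, c i • M i)ᵀ * P * (M₀ + ∑ i, c i • M i)).PosDef := by
  classical
  induction s using Finset.induction with
  | empty =>
    intro c hc hout
    have e : M₀ + ∑ i, c i • M i
        = M₀ + ∑ i, (if (decide (c i = αp i) : Bool) then αp i else αm i) • M i := by
      congr 1
      refine Finset.sum_congr rfl fun i _ => ?_
      by_cases h : c i = αp i
      · simp [h]
      · rcases hout i (by simp) with h' | h'
        · rw [if_neg (by simpa using h), h']
        · exact absurd h' h
    rw [e]
    exact hvert _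
  | insert j s hj ih =>
    intro c hc hout
    -- the two endpoints
    set cp := Function.update c j (αp j) with hcpdef
    set cm := Function.update c j (αm j) with hcmdef
    have hmle : αm j ≤ αp j := le_trans (hc j).1 (hc j).2
    have hcp : ∀ i, cp i ∈ Set.Icc (αm i) (αp i) := by
      intro i
      rcases eq_or_ne i j with rfl | hij
      · simp [hcpdef, Set.mem_Icc, hmle]
      · simpa [hcpdef, Function.update_of_ne hij] using hc i
    have hcm : ∀ i, cm i ∈ Set.Icc (αm i) (αp i) := by
      intro i
      rcases eq_or_ne i j with rfl | hij
      · simp [hcmdef, Set.mem_Icc, hmle]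
      · simpa [hcmdef, Function.update_of_ne hij] using hc i
    have hcp' : ∀ i ∉ s, cp i = αm i ∨ cp i = αp i := by
      intro i hi
      rcases eq_or_ne i j with rfl | hij
      · right; simp [hcpdef]
      · rw [hcpdef, Function.update_of_ne hij]
        exact hout i (by simp [hij, hi])
    have hcm' : ∀ i ∉ s, cm i = αm i ∨ cm i = αp i := by
      intro i hi
      rcases eq_or_ne i j with rfl | hij
      · left; simp [hcmdef]
      · rw [hcmdef, Function.update_of_ne hij]
        exact hout i (by simp [hij, hi])
    -- the interpolation parameter
    obtain ⟨t, ht0, ht1, htj⟩ : ∃ t : ℝ, 0 ≤ t ∧ t ≤ 1 ∧ t * αp j + (1 - t) * αm j = c j := by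
      rcases eq_or_lt_of_le hmle with h | h
      · refine ⟨0, le_refl _, zero_le_one, ?_⟩
        have h1 := (hc j).1
        have h2 := (hc j).2
        rw [← h] at h2
        linarith
      · refine ⟨(c j - αm j) / (αp j - αm j), div_nonneg (by linarith [(hc j).1]) (by linarith),
          (div_le_one (by linarith)).mpr (by linarith [(hc j).2]), ?_⟩
        have hne : αp j - αm j ≠ 0 := by linarith
        field_simp
        ring
    have hsum : M₀ + ∑ i, c i • M i
        = t • (M₀ + ∑ i, cp i • M i) + (1 - t) • (M₀ + ∑ i, cm i • M i) := by
      rw [smul_add, smul_add, Finset.smul_sum, Finset.smul_sum]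
      have h1 : t • M₀ + (1 - t) • M₀ = M₀ := by module
      rw [add_add_add_comm, h1, ← Finset.sum_add_distrib]
      congr 1
      refine Finset.sum_congr rfl fun i _ => ?_
      rcases eq_or_ne i j with rfl | hij
      · rw [hcpdef, hcmdef, Function.update_self, Function.update_self,
          smul_smul, smul_smul, ← add_smul, htj]
      · rw [hcpdef, hcmdef, Function.update_of_ne hij, Function.update_of_ne hij,
          smul_smul, smul_smul, ← add_smul]
        congr 1
        ring
    rw [hsum]
    exact lyap_convex hP ht0 ht1 (ih cp hcp hcp') (ih cm hcm hcm')

/-- `M` is Schur stable: every complex eigenvalue has modulus `< 1`. -/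
def SchurStable {d : ℕ} (M : Matrix (Fin d) (Fin d) ℝ) : Prop :=
  ∀ μ : ℂ, (Matrix.charpoly (M.map ((↑) : ℝ → ℂ))).IsRoot μ → ‖μ‖ < 1

/-- If a common Lyapunov matrix `P` certifies the discrete Lyapunov inequality at all
`2^ν` vertex matrices `M_η`, then `Ā(τ) = M₀ + Σ_i α_i(τ) M_i` is Schur stable for
every `τ ∈ [0, τ̄]`. -/
theorem schurStable_of_vertex_lmis {d ν : ℕ} (τbar : ℝ) (hτbar : 0 < τbar)
    (α : Fin ν → ℝ → ℝ) (hcont : ∀ i, ContinuousOn (α i) (Set.Icc 0 τbar))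
    (αm αp : Fin ν → ℝ)
    (hm : ∀ i, IsLeast (α i '' Set.Icc 0 τbar) (αm i))
    (hp : ∀ i, IsGreatest (α i '' Set.Icc 0 τbar) (αp i))
    (M₀ : Matrix (Fin d) (Fin d) ℝ) (M : Fin ν → Matrix (Fin d) (Fin d) ℝ)
    (P : Matrix (Fin d) (Fin d) ℝ) (hP : P.PosDef)
    (hvert : ∀ η : Fin ν → Bool,
      (P - (M₀ + ∑ i, (if η i then αp i else αm i) • M i)ᵀ * P *
            (M₀ + ∑ i, (if η i then αp i else αm i) • M i)).PosDef) :
    ∀ τ ∈ Set.Icc (0 : ℝ) τbar, SchurStable (M₀ + ∑ i, α i τ • M i) := by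
  intro τ hτ μ hroot
  refine schurStable_of_lyap _ P hP ?_ μ hroot
  refine box_posdef αm αp M₀ M P hP hvert Finset.univ (fun i => α i τ) ?_ ?_
  · intro i
    exact ⟨(hm i).2 (Set.mem_image_of_mem _ hτ), (hp i).2 (Set.mem_image_of_mem _ hτ)⟩
  · intro i hi
    exact absurd (Finset.mem_univ i) hi
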